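/- In a finite upper locally distributive lattice, a comparability x < y is a cover relation if and only if the set of meet-irreducible elements above x exceeds the set of meet-irreducible elements above y by exactly one element, i.e., |M̄_x \ M̄_y| = 1, where M̄_z denotes the set of meet-irreducibles m with m ≥ z. -/

import Mathlib

/-- An element of a finite bounded lattice is meet-irreducible if it has
exactly one upper cover or is the top element. -/
def MeetIrredL {P : Type*} [Lattice P] [OrderTop P] (m : P) : Prop :=
  (∃! u : P, m ⋖ u) ∨ m = ⊤

/-- `Mbar z` is the set of meet-irreducible elements above `z`. -/
def Mbar {P : Type*} [Lattice P] [OrderTop P] (z : P) : Set P :=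
  {m : P | MeetIrredL m ∧ z ≤ m}

/-- If `z < w`, some meet-irreducible is above `z` but not above `w`. -/
lemma mbar_diff_nonempty {P : Type} [Lattice P] [Fintype P] [BoundedOrder P]
    (hULD : ∀ x : P, ∃ M : Finset P, (∀ m ∈ M, MeetIrredL m) ∧ x = M.inf id ∧
      (∀ A : Finset P, (∀ m ∈ A, MeetIrredL m) → x = A.inf id → M ⊆ A))
    {z w : P} (hzw : z < w) : ∃ m, m ∈ Mbar z \ Mbar w := by
  obtain ⟨M, hMirr, hinf, -⟩ := hULD z
  by_cases h : ∀ m ∈ M, w ≤ m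
  · exfalso
    have : w ≤ M.inf id := Finset.le_inf h
    rw [← hinf] at this
    exact absurd this (not_le_of_gt hzw)
  · push_neg at h
    obtain ⟨m, hmM, hwm⟩ := h
    refine ⟨m, ⟨⟨hMirr m hmM, ?_⟩, fun hc => hwm hc.2⟩⟩
    rw [hinf]; exact Finset.inf_le hmM

/-- `Mbar` reflects the order. -/
lemma le_of_mbar_subset {P : Type} [Lattice P] [Fintype P] [BoundedOrder P]
    (hULD : ∀ x : P, ∃ M : Finset P, (∀ m ∈ M, MeetIrredL m) ∧ x = M.inf id ∧
      (∀ A : Finset P, (∀ m ∈ A, MeetIrredL m) → x = A.inf id → M ⊆ A))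
    {z w : P} (h : Mbar w ⊆ Mbar z) : z ≤ w := by
  obtain ⟨M, hMirr, hinf, -⟩ := hULD w
  have : ∀ m ∈ M, z ≤ m := by
    intro m hm
    have hmem : m ∈ Mbar w := ⟨hMirr m hm, by rw [hinf]; exact Finset.inf_le hm⟩
    exact (h hmem).2
  calc z ≤ M.inf id := Finset.le_inf this
    _ = w := hinf.symm

theorem stmt_8 {P : Type} [Lattice P] [Fintype P] [BoundedOrder P]
    (hULD : ∀ x : P, ∃ M : Finset P, (∀ m ∈ M, MeetIrredL m) ∧ x = M.inf id ∧
      (∀ A : Finset P, (∀ m ∈ A, MeetIrredL m) → x = A.inf id → M ⊆ A))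
    (x y : P) (hxy : x < y) :
    x ⋖ y ↔ (Mbar x \ Mbar y).ncard = 1 := by
  constructor
  · intro hcov
    obtain ⟨m0, hm0⟩ := mbar_diff_nonempty hULD hxy
    -- the difference set is a subsingleton
    have hsub : ∀ m1 ∈ Mbar x \ Mbar y, ∀ m2 ∈ Mbar x \ Mbar y, m1 = m2 := by
      intro m1 hm1 m2 hm2
      classical
      by_contra hne
      obtain ⟨My, hMyirr, hMyinf, -⟩ := hULD y
      obtain ⟨Mx, hMxirr, hMxinf, hMxmin⟩ := hULD x
      -- for any m in the difference, m ⊓ y = x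
      have key : ∀ m ∈ Mbar x \ Mbar y, m ⊓ y = x := by
        intro m hm
        have hxle : x ≤ m ⊓ y := le_inf hm.1.2 hxy.le
        have hlt : m ⊓ y < y := by
          refine lt_of_le_of_ne inf_le_right ?_
          intro he
          exact hm.2 ⟨hm.1.1, by rw [← he]; exact inf_le_left⟩
        rcases eq_or_lt_of_le hxle with h | h
        · exact h.symm
        · exact absurd hlt (hcov.2 h)
      have hA : ∀ m ∈ Mbar x \ Mbar y, Mx ⊆ insert m My := by
        intro m hm
        refine hMxmin _ ?_ ?_
        · intro a ha
          rcases Finset.mem_insert.mp ha with rfl | ha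
          · exact hm.1.1
          · exact hMyirr a ha
        · rw [Finset.inf_insert, ← hMyinf, id, key m hm]
      have hMxsub : Mx ⊆ My := by
        intro a ha
        rcases Finset.mem_insert.mp (hA m1 hm1 ha) with rfl | h1
        · rcases Finset.mem_insert.mp (hA m2 hm2 ha) with rfl | h2
          · exact absurd rfl hne
          · exact h2
        · exact h1
      have : y ≤ x := by
        rw [hMxinf]
        refine Finset.le_inf fun a ha => ?_
        rw [hMyinf]
        exact Finset.inf_le (hMxsub ha)
      exact absurd this (not_le_of_gt hxy)
    rw [Set.ncard_eq_one]
    refine ⟨m0, Set.eq_singleton_iff_unique_mem.mpr ⟨hm0, fun a ha => hsub a ha m0 hm0⟩⟩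
  · intro hcard
    constructor
    · exact hxy
    · intro z hxz hzy
      obtain ⟨m1, hm1⟩ := mbar_diff_nonempty hULD hxz
      obtain ⟨m2, hm2⟩ := mbar_diff_nonempty hULD hzy
      have hne : m1 ≠ m2 := fun he => hm1.2 (he ▸ hm2.1)
      have h1 : m1 ∈ Mbar x \ Mbar y := by
        refine ⟨hm1.1, fun hc => hm1.2 ⟨hc.1, le_trans hzy.le hc.2⟩⟩
      have h2 : m2 ∈ Mbar x \ Mbar y := by
        refine ⟨⟨hm2.1.1, le_trans hxz.le hm2.1.2⟩, hm2.2⟩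
      have hpair : ({m1, m2} : Set P) ⊆ Mbar x \ Mbar y := by
        intro a ha
        rcases ha with rfl | ha
        · exact h1
        · exact (Set.mem_singleton_iff.mp ha) ▸ h2
      have : 2 ≤ (Mbar x \ Mbar y).ncard := by
        calc 2 = ({m1, m2} : Set P).ncard := (Set.ncard_pair hne).symm
          _ ≤ _ := Set.ncard_le_ncard hpair (Set.toFinite _)
      omega
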